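/- arXiv:2206.04989 — 9 statements merged into one kernel-verified Lean document; each statement's English description precedes it below -/
import Mathlib

section
/- Let μ > 0, k > 0, ϑ ≥ ν ≥ 0 with ϑ > 0, ℓ₀ ∈ (0,1), α* ∈ (0,1), and constants α_ℓ, α_u with 0 < α_ℓ ≤ α_u < 1. Suppose α, u : [0,∞) × [0,1] → ℝ and ℓ : [0,∞) → [ℓ₀, 1) are such that for every t ≥ 0: the maps x ↦ α(t,x) and x ↦ u(t,x) are continuously differentiable on [0, ℓ(t)] and x ↦ α(t,x)·∂ₓu(t,x) is differentiable there; the momentum balance −μ ∂ₓ(α ∂ₓu) + k α u/(1−α) = −∂ₓ(α Σ(α)) holds on (0, ℓ(t)); u(t,0) = 0; the stress boundary condition μ ∂ₓu(t,ℓ(t)) − Σ(α(t,ℓ(t))) = σ^H(ℓ(t)) holds; α_ℓ ≤ α(t,x) ≤ α_u for all x ∈ [0, ℓ(t)]; and ℓ is differentiable with dℓ/dt(t) = u(t, ℓ(t)) ≥ 0. Then the growth rate vanishes as the tumour length approaches the domain boundary: for every ε > 0 there exists δ > 0 such that for all t ≥ 0, if ℓ(t) > 1 − δ then 0 ≤ dℓ/dt(t)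 < ε. -/
open Topology Filter Set

/-- Cell–cell interaction pressure `Σ(α) = (α − α*)⁺ / (1 − α)²`. -/
noncomputable def cellPressure (αstar a : ℝ) : ℝ := max (a - αstar) 0 / (1 - a) ^ 2

/-- Dimensionless hydrogel stress `σ^H(ℓ) = ν(1−ℓ)/(1−ℓ₀) − ϑ(1−ℓ₀)/(1−ℓ)`. -/
noncomputable def hydrogelStress (ν ϑ ℓ₀ ℓ : ℝ) : ℝ :=
  ν * (1 - ℓ) / (1 - ℓ₀) - ϑ * (1 - ℓ₀) / (1 - ℓ)

lemma cellPressure_nonneg (αstar a : ℝ) : 0 ≤ cellPressure αstar a :=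
  div_nonneg (le_max_right _ _) (sq_nonneg _)

lemma cellPressure_mono {αstar a b : ℝ} (hab : a ≤ b) (hb : b < 1) :
    cellPressure αstar a ≤ cellPressure αstar b := by
  unfold cellPressure
  apply div_le_div₀ (le_max_right _ _) (max_le_max (by linarith) le_rfl)
    (pow_pos (by linarith) 2) (by nlinarith)

lemma diff_cellPressure_comp {a : ℝ → ℝ} {αstar x : ℝ}
    (ha : DifferentiableAt ℝ a x) (hne1 : a x ≠ 1)
    (hgood : a x ≠ αstar ∨ (a x = αstar ∧ deriv a x = 0)) :
    DifferentiableAt ℝ (fun y => a y * cellPressure αstar (a y)) x := by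
  have hpow : ((1 : ℝ) - a x) ^ 2 ≠ 0 := pow_ne_zero _ (sub_ne_zero.mpr (Ne.symm hne1))
  have hpowd : DifferentiableAt ℝ (fun y => ((1:ℝ) - a y) ^ 2) x :=
    ((differentiableAt_const (1:ℝ)).sub ha).pow 2
  simp only [cellPressure]
  rcases hgood with hne | ⟨hax, hder⟩
  · rcases lt_or_gt_of_ne hne with hlt | hgt
    · have hev : ∀ᶠ y in 𝓝 x, a y < αstar :=
        Filter.Tendsto.eventually_lt_const hlt ha.continuousAt
      have hEq : (fun y => a y * (max (a y - αstar) 0 / (1 - a y) ^ 2)) =ᶠ[𝓝 x]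
          fun _ => (0 : ℝ) := by
        filter_upwards [hev] with y hy
        rw [max_eq_right (by linarith), zero_div, mul_zero]
      exact (differentiableAt_const (0:ℝ)).congr_of_eventuallyEq hEq
    · have hev : ∀ᶠ y in 𝓝 x, αstar < a y :=
        Filter.Tendsto.eventually_const_lt hgt ha.continuousAt
      have hd : DifferentiableAt ℝ (fun y => a y * ((a y - αstar) / (1 - a y) ^ 2)) x :=
        ha.mul ((ha.sub_const αstar).div hpowd hpow)
      apply hd.congr_of_eventuallyEq
      filter_upwards [hev] with y hy
      rw [max_eq_left (by linarith)]
  · have hd0 : HasDerivAt a 0 x := hder ▸ ha.hasDerivAt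
    have hmo : HasDerivAt (fun y => max (a y - αstar) 0) 0 x := by
      rw [hasDerivAt_iff_isLittleO]
      have h1 : (fun y => a y - a x - (y - x) • (0:ℝ)) =o[𝓝 x] fun y => y - x :=
        hasDerivAt_iff_isLittleO.mp hd0
      simp only [smul_zero, sub_zero] at h1 ⊢
      have hx0 : max (a x - αstar) 0 = 0 := by rw [hax]; simp
      rw [hx0]
      simp only [sub_zero]
      refine (Asymptotics.isBigO_of_le _ ?_).trans_isLittleO h1
      intro y
      rw [Real.norm_eq_abs, Real.norm_eq_abs, abs_of_nonneg (le_max_right _ _)]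
      rw [hax] at *
      exact max_le (le_abs_self _) (abs_nonneg _)
    exact ha.mul (hmo.differentiableAt.div hpowd hpow)

/-- The tumour growth rate vanishes as the tumour length approaches the domain boundary. -/
theorem growth_rate_vanishes_near_boundary
    (μ k ν ϑ ℓ₀ αstar αl αu : ℝ)
    (hμ : 0 < μ) (hk : 0 < k)
    (hν : 0 ≤ ν) (hνϑ : ν ≤ ϑ) (hϑ : 0 < ϑ)
    (hℓ₀ : ℓ₀ ∈ Set.Ioo (0 : ℝ) 1) (hαstar : αstar ∈ Set.Ioo (0 : ℝ) 1)
    (hαl : 0 < αl) (hαlu : αl ≤ αu) (hαu : αu < 1)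
    (α u : ℝ → ℝ → ℝ) (ℓ ℓ' : ℝ → ℝ)
    (hℓrange : ∀ t, 0 ≤ t → ℓ t ∈ Set.Ico ℓ₀ 1)
    (hαC1 : ∀ t, 0 ≤ t → ContDiffOn ℝ 1 (α t) (Set.Icc 0 (ℓ t)))
    (huC1 : ∀ t, 0 ≤ t → ContDiffOn ℝ 1 (u t) (Set.Icc 0 (ℓ t)))
    (hflux : ∀ t, 0 ≤ t →
      DifferentiableOn ℝ (fun x => α t x * deriv (u t) x) (Set.Icc 0 (ℓ t)))
    (hmom : ∀ t, 0 ≤ t → ∀ x ∈ Set.Ioo 0 (ℓ t),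
      -μ * deriv (fun y => α t y * deriv (u t) y) x
        + k * α t x * u t x / (1 - α t x)
        = -deriv (fun y => α t y * cellPressure αstar (α t y)) x)
    (hu0 : ∀ t, 0 ≤ t → u t 0 = 0)
    (hstress : ∀ t, 0 ≤ t →
      μ * deriv (u t) (ℓ t) - cellPressure αstar (α t (ℓ t))
        = hydrogelStress ν ϑ ℓ₀ (ℓ t))
    (hαbound : ∀ t, 0 ≤ t → ∀ x ∈ Set.Icc 0 (ℓ t), αl ≤ α t x ∧ α t x ≤ αu)
    (hℓder : ∀ t, 0 ≤ t → HasDerivAt ℓ (ℓ' t) t)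
    (hℓeq : ∀ t, 0 ≤ t → ℓ' t = u t (ℓ t))
    (hℓnonneg : ∀ t, 0 ≤ t → 0 ≤ u t (ℓ t)) :
    ∀ ε > 0, ∃ δ > 0, ∀ t, 0 ≤ t → 1 - δ < ℓ t → 0 ≤ ℓ' t ∧ ℓ' t < ε := by
  intro ε hε
  set M := cellPressure αstar αu with hMdef
  have hM0 : 0 ≤ M := cellPressure_nonneg _ _
  have hD : 0 < ν + (M * αu + 1) / αl := by
    have h1 : (0:ℝ) < (M * αu + 1) / αl := div_pos (by nlinarith) hαl
    linarith
  have hℓ₀1 : (0:ℝ) < 1 - ℓ₀ := by linarith [hℓ₀.2]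
  refine ⟨ϑ * (1 - ℓ₀) / (ν + (M * αu + 1) / αl), div_pos (mul_pos hϑ hℓ₀1) hD, ?_⟩
  intro t ht hlt
  obtain ⟨hLl, hL1⟩ := hℓrange t ht
  have hL0 : 0 < ℓ t := lt_of_lt_of_le hℓ₀.1 hLl
  have h1L : (0:ℝ) < 1 - ℓ t := by linarith
  -- hydrogel stress is very negative
  have hσ : hydrogelStress ν ϑ ℓ₀ (ℓ t) ≤ -(M * αu + 1) / αl := by
    have h3 : 1 - ℓ t < ϑ * (1 - ℓ₀) / (ν + (M * αu + 1) / αl) := by linarith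
    have h4 : (1 - ℓ t) * (ν + (M * αu + 1) / αl) < ϑ * (1 - ℓ₀) :=
      (lt_div_iff₀ hD).mp h3
    have h2 : ν + (M * αu + 1) / αl < ϑ * (1 - ℓ₀) / (1 - ℓ t) := by
      rw [lt_div_iff₀ h1L]; nlinarith
    have h5 : ν * (1 - ℓ t) / (1 - ℓ₀) ≤ ν := by
      rw [div_le_iff₀ hℓ₀1]; nlinarith
    have h6 : -(M * αu + 1) / αl = ν - (ν + (M * αu + 1) / αl) := by
      field_simp
      ring
    unfold hydrogelStress
    rw [h6]
    linarith
  have hσ0 : hydrogelStress ν ϑ ℓ₀ (ℓ t) ≤ 0 := by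
    have hnum : -(M * αu + 1) ≤ 0 := by nlinarith
    exact le_trans hσ (div_nonpos_of_nonpos_of_nonneg hnum hαl.le)
  -- main claim: the boundary velocity is nonpositive
  have key : u t (ℓ t) ≤ 0 := by
    by_contra hcon
    push_neg at hcon
    have haC := hαC1 t ht
    have huC := huC1 t ht
    have hvc : ContinuousOn (u t) (Set.Icc 0 (ℓ t)) := huC.continuousOn
    have hvd : DifferentiableOn ℝ (u t) (Set.Icc 0 (ℓ t)) := huC.differentiableOn one_ne_zero
    have had : DifferentiableOn ℝ (α t) (Set.Icc 0 (ℓ t)) := haC.differentiableOn one_ne_zero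
    have hgC : ContinuousOn (fun x => α t x * deriv (u t) x) (Set.Icc 0 (ℓ t)) :=
      (hflux t ht).continuousOn
    have hdiffv : ∀ x ∈ Set.Ioo 0 (ℓ t), DifferentiableAt ℝ (u t) x := fun x hx =>
      hvd.differentiableAt (Icc_mem_nhds hx.1 hx.2)
    have hdiffa : ∀ x ∈ Set.Ioo 0 (ℓ t), DifferentiableAt ℝ (α t) x := fun x hx =>
      had.differentiableAt (Icc_mem_nhds hx.1 hx.2)
    have hdiffg : ∀ x ∈ Set.Ioo 0 (ℓ t),
        DifferentiableAt ℝ (fun x => α t x * deriv (u t) x) x := fun x hx =>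
      (hflux t ht).differentiableAt (Icc_mem_nhds hx.1 hx.2)
    have habd : ∀ x ∈ Set.Icc 0 (ℓ t), αl ≤ α t x ∧ α t x ≤ αu := hαbound t ht
    set F : ℝ → ℝ :=
      fun y => μ * (α t y * deriv (u t) y) - α t y * cellPressure αstar (α t y) with hFdef
    have hFc : ContinuousOn F (Set.Icc 0 (ℓ t)) := by
      apply (continuousOn_const.mul hgC).sub
      apply haC.continuousOn.mul
      simp only [cellPressure]
      have hmaxc : ContinuousOn (fun x => max (α t x - αstar) 0) (Set.Icc 0 (ℓ t)) := by
        exact (haC.continuousOn.sub continuousOn_const).sup continuousOn_const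
      apply ContinuousOn.div hmaxc ((continuousOn_const.sub haC.continuousOn).pow 2)
      intro x hx
      have h2 := (habd x hx).2
      exact pow_ne_zero _ (ne_of_gt (show (0:ℝ) < 1 - α t x by linarith))
    -- derivative of F at good points
    have hFd : ∀ z ∈ Set.Ioo 0 (ℓ t),
        (α t z ≠ αstar ∨ (α t z = αstar ∧ deriv (α t) z = 0)) →
        HasDerivAt F (k * α t z * u t z / (1 - α t z)) z := by
      intro z hz hgood
      have hz1 : α t z ≠ 1 := by
        have h2 := (habd z ⟨hz.1.le, hz.2.le⟩).2
        exact ne_of_lt (by linarith)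
      have hh : DifferentiableAt ℝ (fun y => α t y * cellPressure αstar (α t y)) z :=
        diff_cellPressure_comp (hdiffa z hz) hz1 hgood
      have hg := hdiffg z hz
      have hd : HasDerivAt F
          (μ * deriv (fun x => α t x * deriv (u t) x) z
            - deriv (fun y => α t y * cellPressure αstar (α t y)) z) z :=
        (hg.hasDerivAt.const_mul μ).sub hh.hasDerivAt
      have heq := hmom t ht z hz
      have hlin : μ * deriv (fun x => α t x * deriv (u t) x) z
          - deriv (fun y => α t y * cellPressure αstar (α t y)) z
          = k * α t z * u t z / (1 - α t z) := by linarith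
      rwa [hlin] at hd
    -- the last point where u t ≤ c/2
    set c := u t (ℓ t) with hcdef
    set T := Set.Icc 0 (ℓ t) ∩ u t ⁻¹' Set.Iic (c / 2) with hTdef
    have hT0 : (0:ℝ) ∈ T := ⟨⟨le_refl 0, hL0.le⟩, by
      simp only [Set.mem_preimage, Set.mem_Iic, hu0 t ht]; linarith⟩
    have hTc : IsClosed T := hvc.preimage_isClosed_of_isClosed isClosed_Icc isClosed_Iic
    have hTbdd : BddAbove T := ⟨ℓ t, fun x hx => hx.1.2⟩
    set x₁ := sSup T with hx₁def
    have hx₁T : x₁ ∈ T := hTc.csSup_mem ⟨0, hT0⟩ hTbdd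
    have hx₁0 : 0 ≤ x₁ := hx₁T.1.1
    have hx₁le : x₁ ≤ ℓ t := hx₁T.1.2
    have hvx₁ : u t x₁ ≤ c / 2 := hx₁T.2
    have hx₁lt : x₁ < ℓ t := by
      rcases lt_or_eq_of_le hx₁le with h | h
      · exact h
      · exfalso; rw [h] at hvx₁; rw [← hcdef] at hvx₁; linarith
    have hv2 : ∀ z, x₁ < z → z ≤ ℓ t → c / 2 < u t z := by
      intro z hz1 hz2
      by_contra hle
      push_neg at hle
      have hzT : z ∈ T := ⟨⟨by linarith, hz2⟩, hle⟩
      exact absurd (le_csSup hTbdd hzT) (not_le.mpr hz1)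
    -- mean value theorem
    obtain ⟨ξ, hξmem, hξslope⟩ := exists_hasDerivAt_eq_slope (u t) (deriv (u t)) hx₁lt
      (hvc.mono (Set.Icc_subset_Icc hx₁0 le_rfl))
      (fun x hx => (hdiffv x ⟨lt_of_le_of_lt hx₁0 hx.1, hx.2⟩).hasDerivAt)
    have hξpos : 0 < deriv (u t) ξ := by
      rw [hξslope]
      apply div_pos _ (by linarith [hx₁lt])
      rw [← hcdef]
      linarith
    have hξ0 : 0 < ξ := lt_of_le_of_lt hx₁0 hξmem.1
    -- eventual increase of F to the right of any point of [ξ, ℓ t)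
    have hclaim : ∀ x, ξ ≤ x → x < ℓ t → ∀ᶠ z in 𝓝[>] x, F x < F z := by
      intro x hxξ hxL
      have hx0 : 0 < x := lt_of_lt_of_le hξ0 hxξ
      have hxI : x ∈ Set.Ioo 0 (ℓ t) := ⟨hx0, hxL⟩
      have hKpos : ∀ z ∈ Set.Ioo 0 (ℓ t), x ≤ z →
          0 < k * α t z * u t z / (1 - α t z) := by
        intro z hz hxz
        have hb := habd z ⟨hz.1.le, hz.2.le⟩
        have hvz : c / 2 < u t z :=
          hv2 z (lt_of_lt_of_le (lt_of_lt_of_le hξmem.1 hxξ) hxz) hz.2.le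
        exact div_pos (mul_pos (mul_pos hk (by linarith)) (by linarith)) (by linarith [hb.2])
      rcases ne_or_eq (α t x) αstar with hax | hax
      · -- good point: positive derivative at x
        have hd := hFd x hxI (Or.inl hax)
        rw [hasDerivAt_iff_tendsto_slope] at hd
        have hev : ∀ᶠ z in 𝓝[≠] x, 0 < slope F x z :=
          hd.eventually (eventually_gt_nhds (hKpos x hxI le_rfl))
        have hev' : ∀ᶠ z in 𝓝[>] x, 0 < slope F x z :=
          hev.filter_mono (nhdsWithin_mono x fun z hz => ne_of_gt hz)
        filter_upwards [hev', self_mem_nhdsWithin] with z h1 h2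
        have hxz : x < z := h2
        rw [slope_def_field] at h1
        rcases div_pos_iff.mp h1 with ⟨h3, _⟩ | ⟨_, h4⟩
        · linarith
        · linarith
      · rcases eq_or_ne (deriv (α t) x) 0 with hd0 | hd0
        · -- still a good point
          have hd := hFd x hxI (Or.inr ⟨hax, hd0⟩)
          rw [hasDerivAt_iff_tendsto_slope] at hd
          have hev : ∀ᶠ z in 𝓝[≠] x, 0 < slope F x z :=
            hd.eventually (eventually_gt_nhds (hKpos x hxI le_rfl))
          have hev' : ∀ᶠ z in 𝓝[>] x, 0 < slope F x z :=
            hev.filter_mono (nhdsWithin_mono x fun z hz => ne_of_gt hz)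
          filter_upwards [hev', self_mem_nhdsWithin] with z h1 h2
          have hxz : x < z := h2
          rw [slope_def_field] at h1
          rcases div_pos_iff.mp h1 with ⟨h3, _⟩ | ⟨_, h4⟩
          · linarith
          · linarith
        · -- bad point: the level αstar is crossed transversally, F increases just after x
          have ha' : HasDerivAt (α t) (deriv (α t) x) x := (hdiffa x hxI).hasDerivAt
          have hne : ∀ᶠ z in 𝓝[≠] x, α t z ≠ α t x := ha'.eventually_ne hd0
          have hne' : ∀ᶠ z in 𝓝[>] x, α t z ≠ αstar := by
            have := hne.filter_mono (nhdsWithin_mono x fun z hz => ne_of_gt hz)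
            filter_upwards [this] with z hz
            rw [← hax]; exact hz
          obtain ⟨w, hw, hsub⟩ := mem_nhdsGT_iff_exists_Ioo_subset.mp hne'
          set w' := min w (ℓ t) with hw'def
          have hxw' : x < w' := lt_min hw hxL
          have hmono : StrictMonoOn F (Set.Icc x w') := by
            apply strictMonoOn_of_deriv_pos (convex_Icc x w')
              (hFc.mono (Set.Icc_subset_Icc hx0.le (min_le_right w (ℓ t))))
            intro z hz
            rw [interior_Icc] at hz
            have hzI : z ∈ Set.Ioo 0 (ℓ t) :=
              ⟨lt_trans hx0 hz.1, lt_of_lt_of_le hz.2 (min_le_right _ _)⟩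
            have hzgood : α t z ≠ αstar :=
              hsub ⟨hz.1, lt_of_lt_of_le hz.2 (min_le_left _ _)⟩
            have hd := hFd z hzI (Or.inl hzgood)
            rw [hd.deriv]
            exact hKpos z hzI hz.1.le
          filter_upwards [Ioo_mem_nhdsGT_of_mem (Set.mem_Ico.mpr ⟨le_rfl, hxw'⟩)] with z hz
          exact hmono (Set.left_mem_Icc.mpr hxw'.le) ⟨hz.1.le, hz.2.le⟩ hz.1
    -- hence F ξ ≤ F (ℓ t)
    have hFmono : F ξ ≤ F (ℓ t) := by
      have hsub : Set.Icc ξ (ℓ t) ⊆ {y | F ξ ≤ F y} := by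
        apply IsClosed.Icc_subset_of_forall_exists_gt
        · have hEq : {y | F ξ ≤ F y} ∩ Set.Icc ξ (ℓ t)
              = Set.Icc ξ (ℓ t) ∩ F ⁻¹' Set.Ici (F ξ) := by
            ext y
            simp only [Set.mem_inter_iff, Set.mem_setOf_eq, Set.mem_preimage, Set.mem_Ici]
            tauto
          rw [hEq]
          exact (hFc.mono (Set.Icc_subset_Icc hξ0.le le_rfl)).preimage_isClosed_of_isClosed
            isClosed_Icc isClosed_Ici
        · exact Set.mem_setOf.mpr le_rfl
        · intro z hz y hy
          have hev := hclaim z hz.2.1 hz.2.2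
          have hIoc : Set.Ioc z y ∈ 𝓝[>] z := Ioc_mem_nhdsGT_of_mem ⟨le_rfl, hy⟩
          obtain ⟨w, hw1, hw2⟩ := (hev.and hIoc).exists
          exact ⟨w, le_trans hz.1 hw1.le, hw2⟩
      exact hsub (Set.right_mem_Icc.mpr hξmem.2.le)
    -- value of F at the boundary
    have hFL : F (ℓ t) = α t (ℓ t) * hydrogelStress ν ϑ ℓ₀ (ℓ t) := by
      rw [← hstress t ht]
      show μ * (α t (ℓ t) * deriv (u t) (ℓ t)) - α t (ℓ t) * cellPressure αstar (α t (ℓ t)) = _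
      ring
    have hbL := habd (ℓ t) ⟨hL0.le, le_rfl⟩
    have hFLle : F (ℓ t) ≤ -(M * αu + 1) := by
      rw [hFL]
      have h2 : α t (ℓ t) * hydrogelStress ν ϑ ℓ₀ (ℓ t)
          ≤ αl * hydrogelStress ν ϑ ℓ₀ (ℓ t) :=
        mul_le_mul_of_nonpos_right hbL.1 hσ0
      have h3 : αl * hydrogelStress ν ϑ ℓ₀ (ℓ t) ≤ αl * (-(M * αu + 1) / αl) :=
        mul_le_mul_of_nonneg_left hσ hαl.le
      have h4 : αl * (-(M * αu + 1) / αl) = -(M * αu + 1) := by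
        field_simp
      linarith
    -- contradiction
    have hbξ := habd ξ ⟨hξ0.le, hξmem.2.le⟩
    have hSξ : cellPressure αstar (α t ξ) ≤ M := cellPressure_mono hbξ.2 hαu
    have hSξ0 : 0 ≤ cellPressure αstar (α t ξ) := cellPressure_nonneg _ _
    have hFξ : F ξ = μ * (α t ξ * deriv (u t) ξ) - α t ξ * cellPressure αstar (α t ξ) := rfl
    have h5 : α t ξ * cellPressure αstar (α t ξ) ≤ αu * M :=
      mul_le_mul hbξ.2 hSξ hSξ0 (by linarith)
    have h6 : 0 < μ * (α t ξ * deriv (u t) ξ) :=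
      mul_pos hμ (mul_pos (lt_of_lt_of_le hαl hbξ.1) hξpos)
    have hKey : μ * (α t ξ * deriv (u t) ξ) - α t ξ * cellPressure αstar (α t ξ)
        ≤ -(M * αu + 1) := by
      rw [← hFξ]; linarith
    linarith [h5, h6, hKey]
  have hueq : u t (ℓ t) = 0 := le_antisymm key (hℓnonneg t ht)
  rw [hℓeq t ht, hueq]
  exact ⟨le_rfl, hε⟩
end

section
/- Energy identity for the cell velocity equation: let μ > 0, k > 0, α* ∈ (0,1), L > 0 and s ∈ ℝ. Suppose α, u : [0, L] → ℝ are continuously differentiable with 0 < α(x) < 1 for all x, the map x ↦ α(x)·u′(x) is differentiable, the equation −μ (α u′)′ + k α u/(1−α) = −(α Σ(α))′ holds on (0, L), u(0) = 0, and the stress boundary condition μ u′(L) − Σ(α(L)) = s holds. Then ∫₀^L k α(x) u(x)²/(1−α(x)) dx + ∫₀^L μ α(x) (u′(x))² dx = ∫₀^L α(x) Σ(α(x)) u′(x) dx + α(L) u(L) s. -/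
/-- Energy identity for the cell velocity equation. -/
theorem energy_identity
    (μ k αstar L s : ℝ)
    (hμ : 0 < μ) (hk : 0 < k) (hαstar : αstar ∈ Set.Ioo (0 : ℝ) 1) (hL : 0 < L)
    (α u α' u' w v : ℝ → ℝ)
    (hα : ∀ x ∈ Set.Icc 0 L, HasDerivAt α (α' x) x)
    (hαc : ContinuousOn α' (Set.Icc 0 L))
    (hu : ∀ x ∈ Set.Icc 0 L, HasDerivAt u (u' x) x)
    (huc : ContinuousOn u' (Set.Icc 0 L))
    (hαrange : ∀ x ∈ Set.Icc 0 L, 0 < α x ∧ α x < 1)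
    (hw : ∀ x ∈ Set.Icc 0 L, HasDerivAt (fun y => α y * u' y) (w x) x)
    (hv : ∀ x ∈ Set.Icc 0 L,
      HasDerivAt (fun y => α y * cellPressure αstar (α y)) (v x) x)
    (heq : ∀ x ∈ Set.Ioo 0 L,
      -μ * w x + k * α x * u x / (1 - α x) = -v x)
    (hu0 : u 0 = 0)
    (hbc : μ * u' L - cellPressure αstar (α L) = s) :
    (∫ x in (0:ℝ)..L, k * α x * (u x) ^ 2 / (1 - α x))
      + (∫ x in (0:ℝ)..L, μ * α x * (u' x) ^ 2)
      = (∫ x in (0:ℝ)..L, α x * cellPressure αstar (α x) * u' x)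
        + α L * u L * s := by
  have h0L : (0:ℝ) ∈ Set.Icc (0:ℝ) L := ⟨le_rfl, hL.le⟩
  have hLL : L ∈ Set.Icc (0:ℝ) L := ⟨hL.le, le_rfl⟩
  -- continuity facts
  have hαcont : ContinuousOn α (Set.Icc 0 L) := fun x hx => (hα x hx).continuousAt.continuousWithinAt
  have hucont : ContinuousOn u (Set.Icc 0 L) := fun x hx => (hu x hx).continuousAt.continuousWithinAt
  have hne : ∀ x ∈ Set.Icc (0:ℝ) L, (1 - α x) ≠ 0 := fun x hx =>
    sub_ne_zero.mpr (ne_of_gt (hαrange x hx).2)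
  have hScont : ContinuousOn (fun x => cellPressure αstar (α x)) (Set.Icc 0 L) := by
    unfold cellPressure
    apply ContinuousOn.div
    · exact (continuous_id.max continuous_const).comp_continuousOn (hαcont.sub continuousOn_const)
    · exact (continuousOn_const.sub hαcont).pow 2
    · intro x hx
      exact pow_ne_zero 2 (hne x hx)
  -- the combined integrand
  set H : ℝ → ℝ := fun x =>
    k * α x * (u x) ^ 2 / (1 - α x) + μ * α x * (u' x) ^ 2
      - α x * cellPressure αstar (α x) * u' x with hH
  have hHcont : ContinuousOn H (Set.Icc 0 L) := by
    apply ContinuousOn.sub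
    · apply ContinuousOn.add
      · exact ((continuousOn_const.mul hαcont).mul (hucont.pow 2)).div
          (continuousOn_const.sub hαcont) (hne)
      · exact (continuousOn_const.mul hαcont).mul (huc.pow 2)
    · exact (hαcont.mul hScont).mul huc
  -- the potential F
  set F : ℝ → ℝ := fun x =>
    μ * (α x * u' x) * u x - α x * cellPressure αstar (α x) * u x with hF
  have hFcont : ContinuousOn F (Set.Icc 0 L) := by
    apply ContinuousOn.sub
    · exact (continuousOn_const.mul (hαcont.mul huc)).mul hucont
    · exact (hαcont.mul hScont).mul hucont
  have hFderiv : ∀ x ∈ Set.Ioo (0:ℝ) L, HasDerivAt F (H x) x := by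
    intro x hx
    have hx' : x ∈ Set.Icc (0:ℝ) L := Set.Ioo_subset_Icc_self hx
    have h1 := ((hw x hx').const_mul μ).mul (hu x hx')
    have h2 := (hv x hx').mul (hu x hx')
    have h := h1.sub h2
    refine h.congr_deriv ?_
    have hv' : v x = μ * w x - k * α x * u x / (1 - α x) := by
      have := heq x hx; linarith
    rw [hv']
    have hne' := hne x hx'
    simp only [hH]; field_simp
    ring
  have hHint : IntervalIntegrable H MeasureTheory.volume 0 L :=
    hHcont.intervalIntegrable_of_Icc hL.le
  have hFTC : ∫ x in (0:ℝ)..L, H x = F L - F 0 :=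
    intervalIntegral.integral_eq_sub_of_hasDerivAt_of_le hL.le hFcont hFderiv hHint
  have hFL : F L - F 0 = α L * u L * s := by
    simp only [hF, hu0]
    rw [← hbc]; ring
  -- split the integral of H
  have hint1 : IntervalIntegrable (fun x => k * α x * (u x) ^ 2 / (1 - α x))
      MeasureTheory.volume 0 L :=
    (((continuousOn_const.mul hαcont).mul (hucont.pow 2)).div
      (continuousOn_const.sub hαcont) hne).intervalIntegrable_of_Icc hL.le
  have hint2 : IntervalIntegrable (fun x => μ * α x * (u' x) ^ 2)
      MeasureTheory.volume 0 L :=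
    ((continuousOn_const.mul hαcont).mul (huc.pow 2)).intervalIntegrable_of_Icc hL.le
  have hint3 : IntervalIntegrable (fun x => α x * cellPressure αstar (α x) * u' x)
      MeasureTheory.volume 0 L :=
    ((hαcont.mul hScont).mul huc).intervalIntegrable_of_Icc hL.le
  have hsplit : ∫ x in (0:ℝ)..L, H x
      = (∫ x in (0:ℝ)..L, k * α x * (u x) ^ 2 / (1 - α x))
        + (∫ x in (0:ℝ)..L, μ * α x * (u' x) ^ 2)
        - (∫ x in (0:ℝ)..L, α x * cellPressure αstar (α x) * u' x) := by
    rw [← intervalIntegral.integral_add hint1 hint2,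
      ← intervalIntegral.integral_sub (hint1.add hint2) hint3]
  rw [hFTC, hFL] at hsplit
  linarith
end

section
/- L² bound on the velocity gradient: let μ > 0, k > 0, α* ∈ (0,1), L > 0 and s ≤ 0. Suppose α, u : [0, L] → ℝ are continuously differentiable with α_ℓ ≤ α(x) ≤ α_u for constants 0 < α_ℓ ≤ α_u < 1, the map x ↦ α(x) u′(x) is differentiable, −μ (α u′)′ + k α u/(1−α) = −(α Σ(α))′ on (0, L), u(0) = 0, u(L) ≥ 0, and μ u′(L) − Σ(α(L)) = s. Then μ α_ℓ (∫₀^L (u′(x))² dx)^{1/2} ≤ √L · α_u (α_u − α*)⁺/(1 − α_u)². -/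
/-- Elementary Cauchy–Schwarz for interval integrals. -/
lemma abs_integral_le_sqrt_mul_sqrt (L : ℝ) (hL : 0 < L) (f : ℝ → ℝ)
    (hf : ContinuousOn f (Set.Icc 0 L)) :
    ∫ x in (0:ℝ)..L, |f x| ≤ Real.sqrt L * Real.sqrt (∫ x in (0:ℝ)..L, f x ^ 2) := by
  have hL' : (0:ℝ) ≤ L := hL.le
  have hIcc : Set.uIcc (0:ℝ) L = Set.Icc 0 L := Set.uIcc_of_le hL'
  have habs : ContinuousOn (fun x => |f x|) (Set.Icc 0 L) := hf.abs
  have h1 : IntervalIntegrable (fun x => |f x|) MeasureTheory.volume 0 L := by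
    apply ContinuousOn.intervalIntegrable; rwa [hIcc]
  have h2 : IntervalIntegrable (fun x => f x ^ 2) MeasureTheory.volume 0 L := by
    apply ContinuousOn.intervalIntegrable; rw [hIcc]; exact hf.pow 2
  set A := ∫ x in (0:ℝ)..L, |f x| with hA
  set B := ∫ x in (0:ℝ)..L, f x ^ 2 with hB
  have hA0 : 0 ≤ A := intervalIntegral.integral_nonneg hL' (fun x _ => abs_nonneg _)
  have hB0 : 0 ≤ B := intervalIntegral.integral_nonneg hL' (fun x _ => sq_nonneg _)
  have key : ∀ t : ℝ, 0 ≤ L * (t * t) + (-2 * A) * t + B := by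
    intro t
    have hnn : 0 ≤ ∫ x in (0:ℝ)..L, (t - |f x|) ^ 2 :=
      intervalIntegral.integral_nonneg hL' (fun x _ => sq_nonneg _)
    have hexp : (∫ x in (0:ℝ)..L, (t - |f x|) ^ 2)
        = L * (t * t) + (-2 * A) * t + B := by
      have heq : ∀ x, (t - |f x|) ^ 2 = t ^ 2 + ((-2 * t) * |f x| + f x ^ 2) := by
        intro x
        have : |f x| ^ 2 = f x ^ 2 := sq_abs _
        nlinarith [this]
      rw [intervalIntegral.integral_congr (fun x _ => heq x)]
      rw [intervalIntegral.integral_add intervalIntegrable_const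
        ((h1.const_mul _).add h2),
        intervalIntegral.integral_add (h1.const_mul _) h2,
        intervalIntegral.integral_const_mul, intervalIntegral.integral_const]
      simp only [smul_eq_mul, sub_zero]
      ring
    linarith [hnn, hexp ▸ hnn, le_of_eq hexp.symm, hexp ▸ hnn]
  have hdisc : discrim L (-2 * A) B ≤ 0 := discrim_le_zero key
  rw [discrim] at hdisc
  have hAB : A ^ 2 ≤ L * B := by nlinarith
  calc A = Real.sqrt (A ^ 2) := (Real.sqrt_sq hA0).symm
    _ ≤ Real.sqrt (L * B) := Real.sqrt_le_sqrt hAB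
    _ = Real.sqrt L * Real.sqrt B := Real.sqrt_mul hL' _

/-- L² bound on the velocity gradient for a compressive hydrogel stress `s ≤ 0`. -/
theorem velocity_gradient_L2_bound
    (μ k αstar L s αl αu : ℝ)
    (hμ : 0 < μ) (hk : 0 < k) (hαstar : αstar ∈ Set.Ioo (0 : ℝ) 1) (hL : 0 < L)
    (hs : s ≤ 0)
    (hαl : 0 < αl) (hαlu : αl ≤ αu) (hαu : αu < 1)
    (α u α' u' w v : ℝ → ℝ)
    (hα : ∀ x ∈ Set.Icc 0 L, HasDerivAt α (α' x) x)
    (hαc : ContinuousOn α' (Set.Icc 0 L))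
    (hu : ∀ x ∈ Set.Icc 0 L, HasDerivAt u (u' x) x)
    (huc : ContinuousOn u' (Set.Icc 0 L))
    (hαrange : ∀ x ∈ Set.Icc 0 L, αl ≤ α x ∧ α x ≤ αu)
    (hw : ∀ x ∈ Set.Icc 0 L, HasDerivAt (fun y => α y * u' y) (w x) x)
    (hv : ∀ x ∈ Set.Icc 0 L,
      HasDerivAt (fun y => α y * cellPressure αstar (α y)) (v x) x)
    (heq : ∀ x ∈ Set.Ioo 0 L,
      -μ * w x + k * α x * u x / (1 - α x) = -v x)
    (hu0 : u 0 = 0) (huL : 0 ≤ u L)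
    (hbc : μ * u' L - cellPressure αstar (α L) = s) :
    μ * αl * Real.sqrt (∫ x in (0:ℝ)..L, (u' x) ^ 2)
      ≤ Real.sqrt L * (αu * max (αu - αstar) 0 / (1 - αu) ^ 2) := by
  have hL' : (0:ℝ) ≤ L := hL.le
  have hIcc : Set.uIcc (0:ℝ) L = Set.Icc 0 L := Set.uIcc_of_le hL'
  have h0mem : (0:ℝ) ∈ Set.Icc 0 L := ⟨le_refl 0, hL'⟩
  have hLmem : L ∈ Set.Icc 0 L := ⟨hL', le_refl L⟩
  have hαcont : ContinuousOn α (Set.Icc 0 L) :=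
    fun x hx => (hα x hx).continuousAt.continuousWithinAt
  have hucont : ContinuousOn u (Set.Icc 0 L) :=
    fun x hx => (hu x hx).continuousAt.continuousWithinAt
  have h1α : ∀ x ∈ Set.Icc 0 L, 0 < 1 - α x := by
    intro x hx; have := (hαrange x hx).2; linarith
  have hαpos : ∀ x ∈ Set.Icc 0 L, 0 < α x :=
    fun x hx => lt_of_lt_of_le hαl (hαrange x hx).1
  -- continuity of the pressure composite
  have hPcont : ContinuousOn (fun x => cellPressure αstar (α x)) (Set.Icc 0 L) := by
    unfold cellPressure
    apply ContinuousOn.div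
    · have hm : Continuous fun a : ℝ => max (a - αstar) 0 :=
        (continuous_id.sub continuous_const).max continuous_const
      exact hm.comp_continuousOn hαcont
    · exact (continuousOn_const.sub hαcont).pow 2
    · intro x hx; exact pow_ne_zero 2 (h1α x hx).ne'
  set P : ℝ → ℝ := fun x => cellPressure αstar (α x) with hP
  -- the integrand g, continuous on [0, L]
  set g : ℝ → ℝ := fun x =>
    k * α x * u x ^ 2 / (1 - α x) + μ * α x * u' x ^ 2 - α x * P x * u' x with hg
  have hgcont : ContinuousOn g (Set.Icc 0 L) := by
    apply ContinuousOn.sub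
    · apply ContinuousOn.add
      · apply ContinuousOn.div
        · exact (continuousOn_const.mul hαcont).mul (hucont.pow 2)
        · exact continuousOn_const.sub hαcont
        · intro x hx; exact (h1α x hx).ne'
      · exact (continuousOn_const.mul hαcont).mul (huc.pow 2)
    · exact (hαcont.mul hPcont).mul huc
  have hgint : IntervalIntegrable g MeasureTheory.volume 0 L := by
    apply ContinuousOn.intervalIntegrable; rwa [hIcc]
  -- FTC / energy identity
  set F : ℝ → ℝ := fun y => (μ * (α y * u' y) - α y * P y) * u y with hF
  have hFcont : ContinuousOn F (Set.Icc 0 L) :=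
    ((continuousOn_const.mul (hαcont.mul huc)).sub (hαcont.mul hPcont)).mul hucont
  have hFderiv : ∀ x ∈ Set.Ioo (0:ℝ) L, HasDerivAt F (g x) x := by
    intro x hx
    have hx' : x ∈ Set.Icc 0 L := Set.mem_Icc_of_Ioo hx
    have h1 : HasDerivAt (fun y => μ * (α y * u' y) - α y * P y)
        (μ * w x - v x) x := ((hw x hx').const_mul μ).sub (hv x hx')
    have h2 := h1.mul (hu x hx')
    have h3 : μ * w x - v x = k * α x * u x / (1 - α x) := by
      have := heq x hx; linarith
    refine HasDerivAt.congr_deriv h2 ?_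
    rw [hg, h3]
    have hne : (1 - α x) ≠ 0 := (h1α x hx').ne'
    field_simp
    ring
  have key : (∫ x in (0:ℝ)..L, g x) = α L * u L * s := by
    rw [intervalIntegral.integral_eq_sub_of_hasDerivAt_of_le hL' hFcont hFderiv hgint]
    rw [hF]
    simp only [hu0, mul_zero, sub_zero]
    rw [← hbc]
    ring
  -- split the integral
  have hi1 : IntervalIntegrable (fun x => k * α x * u x ^ 2 / (1 - α x))
      MeasureTheory.volume 0 L := by
    apply ContinuousOn.intervalIntegrable; rw [hIcc]
    apply ContinuousOn.div
    · exact (continuousOn_const.mul hαcont).mul (hucont.pow 2)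
    · exact continuousOn_const.sub hαcont
    · intro x hx; exact (h1α x hx).ne'
  have hi2 : IntervalIntegrable (fun x => μ * α x * u' x ^ 2)
      MeasureTheory.volume 0 L := by
    apply ContinuousOn.intervalIntegrable; rw [hIcc]
    exact (continuousOn_const.mul hαcont).mul (huc.pow 2)
  have hi3 : IntervalIntegrable (fun x => α x * P x * u' x)
      MeasureTheory.volume 0 L := by
    apply ContinuousOn.intervalIntegrable; rw [hIcc]
    exact (hαcont.mul hPcont).mul huc
  have hsplit : (∫ x in (0:ℝ)..L, g x)
      = (∫ x in (0:ℝ)..L, k * α x * u x ^ 2 / (1 - α x))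
        + (∫ x in (0:ℝ)..L, μ * α x * u' x ^ 2)
        - (∫ x in (0:ℝ)..L, α x * P x * u' x) := by
    rw [hg]
    rw [intervalIntegral.integral_sub (hi1.add hi2) hi3,
      intervalIntegral.integral_add hi1 hi2]
  have hkpos : 0 ≤ ∫ x in (0:ℝ)..L, k * α x * u x ^ 2 / (1 - α x) := by
    apply intervalIntegral.integral_nonneg hL'
    intro x hx
    have := h1α x hx
    have := hαpos x hx
    positivity
  have hbdry : α L * u L * s ≤ 0 :=
    mul_nonpos_of_nonneg_of_nonpos (mul_nonneg (hαpos L hLmem).le huL) hs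
  have hstep : (∫ x in (0:ℝ)..L, μ * α x * u' x ^ 2)
      ≤ ∫ x in (0:ℝ)..L, α x * P x * u' x := by
    have h : (∫ x in (0:ℝ)..L, k * α x * u x ^ 2 / (1 - α x))
        + (∫ x in (0:ℝ)..L, μ * α x * u' x ^ 2)
        - (∫ x in (0:ℝ)..L, α x * P x * u' x) = α L * u L * s := by
      rw [← hsplit]; exact key
    linarith [h, hkpos, hbdry]
  -- lower bound for the LHS integral
  have hu2int : IntervalIntegrable (fun x => u' x ^ 2) MeasureTheory.volume 0 L := by
    apply ContinuousOn.intervalIntegrable; rw [hIcc]; exact huc.pow 2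
  have hlow : μ * αl * (∫ x in (0:ℝ)..L, u' x ^ 2)
      ≤ ∫ x in (0:ℝ)..L, μ * α x * u' x ^ 2 := by
    rw [← intervalIntegral.integral_const_mul]
    apply intervalIntegral.integral_mono_on hL' (hu2int.const_mul _) hi2
    intro x hx
    have h1 := (hαrange x hx).1
    have h2 := sq_nonneg (u' x)
    nlinarith [mul_le_mul_of_nonneg_right h1 h2, hμ.le, hμ]
  -- upper pointwise bound
  set C : ℝ := αu * max (αu - αstar) 0 / (1 - αu) ^ 2 with hC
  have hC0 : 0 ≤ C := by
    have h1 : (0:ℝ) < 1 - αu := by linarith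
    have h2 : (0:ℝ) < αu := lt_of_lt_of_le hαl hαlu
    positivity
  have hup : (∫ x in (0:ℝ)..L, α x * P x * u' x)
      ≤ C * ∫ x in (0:ℝ)..L, |u' x| := by
    rw [← intervalIntegral.integral_const_mul]
    have habsint : IntervalIntegrable (fun x => C * |u' x|) MeasureTheory.volume 0 L := by
      apply ContinuousOn.intervalIntegrable; rw [hIcc]
      exact continuousOn_const.mul huc.abs
    apply intervalIntegral.integral_mono_on hL' hi3 habsint
    intro x hx
    have hα1 := (hαrange x hx).1
    have hα2 := (hαrange x hx).2
    have h1x := h1α x hx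
    have h1u : (0:ℝ) < 1 - αu := by linarith
    have hPx : 0 ≤ P x := by
      rw [hP]; unfold cellPressure; positivity
    have hαP : α x * P x ≤ C := by
      rw [hP, hC]; unfold cellPressure
      rw [mul_div_assoc']
      have hnum : α x * max (α x - αstar) 0 ≤ αu * max (αu - αstar) 0 :=
        mul_le_mul hα2 (max_le_max (by linarith) le_rfl)
          (le_max_right _ _) (by linarith)
      have hden : (1 - αu) ^ 2 ≤ (1 - α x) ^ 2 :=
        pow_le_pow_left₀ h1u.le (by linarith) 2
      have h0 : (0:ℝ) ≤ αu * max (αu - αstar) 0 := mul_nonneg (by linarith) (le_max_right _ _)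
      exact div_le_div₀ h0 hnum (by positivity) hden
    calc α x * P x * u' x ≤ α x * P x * |u' x| := by
          apply mul_le_mul_of_nonneg_left (le_abs_self _)
            (mul_nonneg (by linarith) hPx)
      _ ≤ C * |u' x| := mul_le_mul_of_nonneg_right hαP (abs_nonneg _)
  -- Cauchy-Schwarz
  have hcs := abs_integral_le_sqrt_mul_sqrt L hL u' huc
  set N := Real.sqrt (∫ x in (0:ℝ)..L, u' x ^ 2) with hN
  have hN0 : 0 ≤ N := Real.sqrt_nonneg _
  have hNsq : N ^ 2 = ∫ x in (0:ℝ)..L, u' x ^ 2 :=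
    Real.sq_sqrt (intervalIntegral.integral_nonneg hL' (fun x _ => sq_nonneg _))
  have hchain : μ * αl * N ^ 2 ≤ C * (Real.sqrt L * N) := by
    rw [hNsq]
    calc μ * αl * (∫ x in (0:ℝ)..L, u' x ^ 2)
        ≤ ∫ x in (0:ℝ)..L, μ * α x * u' x ^ 2 := hlow
      _ ≤ ∫ x in (0:ℝ)..L, α x * P x * u' x := hstep
      _ ≤ C * ∫ x in (0:ℝ)..L, |u' x| := hup
      _ ≤ C * (Real.sqrt L * N) := mul_le_mul_of_nonneg_left hcs hC0
  -- conclude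
  show μ * αl * N ≤ Real.sqrt L * C
  rcases eq_or_lt_of_le hN0 with h | h
  · rw [← h, mul_zero]
    positivity
  · have := (mul_le_mul_iff_of_pos_right h).mp (by nlinarith [hchain] : μ * αl * N * N ≤ Real.sqrt L * C * N)
    exact this
end

section
/- Bound on the boundary cell velocity: let μ > 0, k > 0, α* ∈ (0,1), L > 0 and s < 0. Suppose α, u : [0, L] → ℝ are continuously differentiable with α_ℓ ≤ α(x) ≤ α_u for constants 0 < α_ℓ ≤ α_u < 1, the map x ↦ α(x) u′(x) is differentiable, −μ (α u′)′ + k α u/(1−α) = −(α Σ(α))′ on (0, L), u(0) = 0, u(L) ≥ 0, and μ u′(L) − Σ(α(L)) = s. Then u(L) ≤ (L / (μ α_ℓ² |s|)) · (α_u (α_u − α*)⁺ / (1 − α_u)²)². -/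
set_option maxHeartbeats 1000000
/-- Bound on the boundary cell velocity for a strictly compressive hydrogel stress `s < 0`. -/
theorem boundary_velocity_bound
    (μ k αstar L s αl αu : ℝ)
    (hμ : 0 < μ) (hk : 0 < k) (hαstar : αstar ∈ Set.Ioo (0 : ℝ) 1) (hL : 0 < L)
    (hs : s < 0)
    (hαl : 0 < αl) (hαlu : αl ≤ αu) (hαu : αu < 1)
    (α u α' u' w v : ℝ → ℝ)
    (hα : ∀ x ∈ Set.Icc 0 L, HasDerivAt α (α' x) x)
    (hαc : ContinuousOn α' (Set.Icc 0 L))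
    (hu : ∀ x ∈ Set.Icc 0 L, HasDerivAt u (u' x) x)
    (huc : ContinuousOn u' (Set.Icc 0 L))
    (hαrange : ∀ x ∈ Set.Icc 0 L, αl ≤ α x ∧ α x ≤ αu)
    (hw : ∀ x ∈ Set.Icc 0 L, HasDerivAt (fun y => α y * u' y) (w x) x)
    (hv : ∀ x ∈ Set.Icc 0 L,
      HasDerivAt (fun y => α y * cellPressure αstar (α y)) (v x) x)
    (heq : ∀ x ∈ Set.Ioo 0 L,
      -μ * w x + k * α x * u x / (1 - α x) = -v x)
    (hu0 : u 0 = 0) (huL : 0 ≤ u L)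
    (hbc : μ * u' L - cellPressure αstar (α L) = s) :
    u L ≤ (L / (μ * αl ^ 2 * |s|))
      * (αu * max (αu - αstar) 0 / (1 - αu) ^ 2) ^ 2 := by
  have hαu0 : 0 < αu := lt_of_lt_of_le hαl hαlu
  have hαu1 : 0 < 1 - αu := by linarith
  set M : ℝ := αu * max (αu - αstar) 0 / (1 - αu) ^ 2 with hM
  have hM0 : 0 ≤ M := by
    rw [hM]
    exact div_nonneg (mul_nonneg hαu0.le (le_max_right _ _)) (sq_nonneg _)
  set C : ℝ := M ^ 2 / (4 * μ * αl) with hC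
  have h4μαl : (0:ℝ) < 4 * μ * αl := by nlinarith
  have hC0 : 0 ≤ C := div_nonneg (sq_nonneg M) h4μαl.le
  set Φ : ℝ → ℝ := fun x =>
    -μ * (α x * u' x) * u x + (α x * cellPressure αstar (α x)) * u x - x * C with hΦ
  set Φ' : ℝ → ℝ := fun x =>
    -μ * (w x * u x + (α x * u' x) * u' x)
      + (v x * u x + (α x * cellPressure αstar (α x)) * u' x) - C with hΦ'
  have hΦd : ∀ x ∈ Set.Icc 0 L, HasDerivAt Φ (Φ' x) x := by
    intro x hx
    have h1 := (((hw x hx).const_mul (-μ)).mul (hu x hx)).add ((hv x hx).mul (hu x hx))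
    have h2 := h1.sub ((hasDerivAt_id x).const_mul C)
    have hfun : Φ = fun y =>
        -μ * (α y * u' y) * u y + (α y * cellPressure αstar (α y)) * u y - C * y := by
      funext y; simp only [hΦ]; ring
    rw [hfun]
    exact h2.congr_deriv (by simp only [hΦ']; ring)
  -- pointwise bound on Φ'
  have key : ∀ x ∈ Set.Ioo 0 L, Φ' x ≤ 0 := by
    intro x hx
    have hxI : x ∈ Set.Icc 0 L := Set.mem_Icc.mpr ⟨le_of_lt hx.1, le_of_lt hx.2⟩
    obtain ⟨ha1, ha2⟩ := hαrange x hxI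
    have ha0 : 0 < α x := lt_of_lt_of_le hαl ha1
    have ha3 : 0 < 1 - α x := by linarith
    have hSg0 : 0 ≤ cellPressure αstar (α x) := by
      unfold cellPressure
      exact div_nonneg (le_max_right _ _) (sq_nonneg _)
    have hmono : α x * cellPressure αstar (α x) ≤ M := by
      have hre : α x * cellPressure αstar (α x)
          = α x * max (α x - αstar) 0 / (1 - α x) ^ 2 := by
        unfold cellPressure; ring
      rw [hre, hM]
      apply div_le_div₀ (mul_nonneg hαu0.le (le_max_right _ _))
      · exact mul_le_mul ha2 (max_le_max (by linarith) le_rfl) (le_max_right _ _) hαu0.le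
      · exact pow_pos hαu1 2
      · exact pow_le_pow_left₀ hαu1.le (by linarith) 2
    have heqx := heq x hx
    have huv : v x * u x - μ * (w x * u x) = -(k * α x * u x / (1 - α x)) * u x := by
      have h : v x - μ * w x = -(k * α x * u x / (1 - α x)) := by linarith
      calc v x * u x - μ * (w x * u x) = (v x - μ * w x) * u x := by ring
        _ = -(k * α x * u x / (1 - α x)) * u x := by rw [h]
    have hterm1 : v x * u x - μ * (w x * u x) ≤ 0 := by
      rw [huv]
      have h1 : (0:ℝ) ≤ k * α x * (u x) ^ 2 / (1 - α x) :=
        div_nonneg (mul_nonneg (mul_nonneg hk.le ha0.le) (sq_nonneg _)) ha3.le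
      have h2 : -(k * α x * u x / (1 - α x)) * u x
          = -(k * α x * (u x) ^ 2 / (1 - α x)) := by ring
      rw [h2]; linarith
    set a := α x
    set sg := cellPressure αstar (α x)
    have h4a : (0:ℝ) < 4 * μ * a := by nlinarith
    have hcauchy : a * sg * u' x - μ * (a * u' x * u' x) ≤ (a * sg) ^ 2 / (4 * μ * a) := by
      rw [le_div_iff₀ h4a]
      nlinarith [sq_nonneg (a * sg - 2 * μ * a * u' x)]
    have hCbd : (a * sg) ^ 2 / (4 * μ * a) ≤ C := by
      rw [hC]
      apply div_le_div₀ (sq_nonneg M)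
      · exact pow_le_pow_left₀ (mul_nonneg ha0.le hSg0) hmono 2
      · exact h4μαl
      · nlinarith
    simp only [hΦ']
    linarith [hterm1, hcauchy, hCbd]
  -- Φ is antitone on [0, L]
  have hanti : AntitoneOn Φ (Set.Icc 0 L) := by
    apply antitoneOn_of_deriv_nonpos (convex_Icc 0 L)
    · exact fun x hx => (hΦd x hx).continuousAt.continuousWithinAt
    · intro x hx
      rw [interior_Icc] at hx
      exact (hΦd x (Set.mem_Icc.mpr ⟨le_of_lt hx.1, le_of_lt hx.2⟩)).differentiableAt.differentiableWithinAt
    · intro x hx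
      rw [interior_Icc] at hx
      rw [(hΦd x (Set.mem_Icc.mpr ⟨le_of_lt hx.1, le_of_lt hx.2⟩)).deriv]
      exact key x hx
  have hΦL : Φ L ≤ Φ 0 :=
    hanti (Set.left_mem_Icc.mpr hL.le) (Set.right_mem_Icc.mpr hL.le) hL.le
  have hΦ0 : Φ 0 = 0 := by simp [hΦ, hu0]
  have hΦLval : Φ L = -(α L * u L * s) - L * C := by
    simp only [hΦ]
    rw [← hbc]
    ring
  obtain ⟨haL1, haL2⟩ := hαrange L (Set.right_mem_Icc.mpr hL.le)
  have hαL0 : 0 < α L := lt_of_lt_of_le hαl haL1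
  have habs : |s| = -s := abs_of_neg hs
  have h1 : -(α L * u L * s) ≤ L * C := by
    rw [hΦLval, hΦ0] at hΦL
    linarith
  have h2 : αl * |s| * u L ≤ -(α L * u L * s) := by
    rw [habs]
    nlinarith [mul_nonneg (mul_nonneg (sub_nonneg.mpr haL1) (neg_nonneg.mpr hs.le)) huL]
  have h3 : αl * |s| * u L ≤ L * (M ^ 2 / (4 * μ * αl)) := by
    rw [← hC]; linarith
  have hs0 : 0 < |s| := abs_pos.mpr (ne_of_lt hs)
  have hpos : 0 < μ * αl ^ 2 * |s| := mul_pos (mul_pos hμ (pow_pos hαl 2)) hs0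
  rw [div_mul_eq_mul_div, le_div_iff₀ hpos]
  have e : L * (M ^ 2 / (4 * μ * αl)) * (4 * μ * αl) = L * M ^ 2 := by
    field_simp
  have h3' := mul_le_mul_of_nonneg_right h3 h4μαl.le
  rw [e] at h3'
  linarith [mul_nonneg (mul_nonneg (mul_nonneg hμ.le (sq_nonneg αl)) hs0.le) huL]
end

section
/- Tumour elimination at the sub-packing steady state: let μ > 0, ϑ > ν ≥ 0, α* ∈ (0,1), and let α₀ : [0, ∞) → [0, 1) be continuous with α₀(t) → a as t → ∞ for some a ∈ [0, α*]. Suppose ℓ₁ : [0, ∞) → (0, ∞) is differentiable and satisfies μ ℓ₁′(t)/ℓ₁(t) = (ν − ϑ) + Σ(α₀(t)) for all t ≥ 0. Then (log ℓ₁(t))/t → (ν − ϑ)/μ < 0 as t → ∞, and ℓ₁(t) → 0 as t → ∞; i.e., the tumour is eliminated at rate −(ϑ − ν)/μ. -/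
/-- Tumour elimination at the sub-packing steady state. -/
theorem tumour_elimination_sub_packing
    (μ ν ϑ αstar a : ℝ) (hμ : 0 < μ) (hν : 0 ≤ ν) (hνϑ : ν < ϑ)
    (hαstar : αstar ∈ Set.Ioo (0 : ℝ) 1)
    (α₀ : ℝ → ℝ)
    (hα₀cont : ContinuousOn α₀ (Set.Ici 0))
    (hα₀range : ∀ t, 0 ≤ t → α₀ t ∈ Set.Ico (0 : ℝ) 1)
    (ha : a ∈ Set.Icc (0 : ℝ) αstar)
    (hα₀lim : Filter.Tendsto α₀ Filter.atTop (nhds a))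
    (ℓ₁ ℓ₁' : ℝ → ℝ)
    (hpos : ∀ t, 0 ≤ t → 0 < ℓ₁ t)
    (hder : ∀ t, 0 ≤ t → HasDerivAt ℓ₁ (ℓ₁' t) t)
    (heq : ∀ t, 0 ≤ t →
      μ * ℓ₁' t / ℓ₁ t = (ν - ϑ) + cellPressure αstar (α₀ t)) :
    (Filter.Tendsto (fun t => Real.log (ℓ₁ t) / t) Filter.atTop
        (nhds ((ν - ϑ) / μ)) ∧ (ν - ϑ) / μ < 0) ∧
      Filter.Tendsto ℓ₁ Filter.atTop (nhds 0) := by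
  set L : ℝ := (ν - ϑ) / μ with hL
  have hLneg : L < 0 := div_neg_of_neg_of_pos (by linarith) hμ
  set g : ℝ → ℝ := fun t => Real.log (ℓ₁ t) with hg
  set φ : ℝ → ℝ := fun t => ℓ₁' t / ℓ₁ t with hφ
  -- derivative of g
  have hgder : ∀ t, 0 ≤ t → HasDerivAt g (φ t) t := fun t ht =>
    (hder t ht).log (hpos t ht).ne'
  -- φ t = L + Σ/μ
  have hφeq : ∀ t, 0 ≤ t → φ t = L + cellPressure αstar (α₀ t) / μ := by
    intro t ht
    have h := heq t ht
    have hl := (hpos t ht).ne'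
    field_simp [hφ, hL]
    field_simp at h
    simp only [hφ, hL]
    field_simp
    linarith [h]
  -- cellPressure αstar a = 0
  have ha0 : cellPressure αstar a = 0 := by
    have : a - αstar ≤ 0 := by linarith [ha.2]
    simp [cellPressure, max_eq_right this]
  -- Σ(α₀ t) → 0
  have hSig : Filter.Tendsto (fun t => cellPressure αstar (α₀ t)) Filter.atTop (nhds 0) := by
    have hcont : ContinuousAt (cellPressure αstar) a := by
      have h1a : (1 : ℝ) - a ≠ 0 := by
        have : a < 1 := lt_of_le_of_lt ha.2 hαstar.2
        intro h; linarith [sub_eq_zero.mp h]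
      unfold cellPressure
      exact (continuous_max.comp ((continuous_id.sub continuous_const).prodMk
        continuous_const)).continuousAt.div
        (((continuous_const.sub continuous_id).pow 2).continuousAt) (pow_ne_zero 2 h1a)
    rw [← ha0]
    exact hcont.tendsto.comp hα₀lim
  -- φ → L along atTop
  have hφlim : Filter.Tendsto φ Filter.atTop (nhds L) := by
    have h1 : Filter.Tendsto (fun t => L + cellPressure αstar (α₀ t) / μ)
        Filter.atTop (nhds (L + 0 / μ)) :=
      Filter.Tendsto.add tendsto_const_nhds (hSig.div_const μ)
    rw [zero_div, add_zero] at h1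
    refine h1.congr' ?_
    filter_upwards [Filter.eventually_ge_atTop (0 : ℝ)] with t ht
    exact (hφeq t ht).symm
  -- main limit: g t / t → L
  have hmain : Filter.Tendsto (fun t => g t / t) Filter.atTop (nhds L) := by
    rw [Metric.tendsto_atTop]
    intro ε hε
    obtain ⟨T, hT⟩ := (Metric.tendsto_atTop.mp hφlim) (ε / 2) (by linarith)
    set T' : ℝ := max T 0 with hT'
    have hT'0 : (0 : ℝ) ≤ T' := le_max_right _ _
    obtain ⟨N, hN1, hN2, hN3⟩ : ∃ N : ℝ, T' ≤ N ∧ 1 ≤ N ∧ |g T' - L * T'| / N < ε / 2 := by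
      rcases eq_or_ne (|g T' - L * T'|) 0 with h0 | h0
      · exact ⟨max T' 1, le_max_left _ _, le_max_right _ _, by
          rw [h0, zero_div]; linarith⟩
      · refine ⟨max (max T' 1) (4 * |g T' - L * T'| / ε), le_trans (le_max_left _ _) (le_max_left _ _),
          le_trans (le_max_right _ _) (le_max_left _ _), ?_⟩
        have habs : 0 < |g T' - L * T'| := lt_of_le_of_ne (abs_nonneg _) (Ne.symm h0)
        have hNpos : (0:ℝ) < max (max T' 1) (4 * |g T' - L * T'| / ε) :=
          lt_of_lt_of_le one_pos (le_trans (le_max_right _ _) (le_max_left _ _))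
        rw [div_lt_iff₀ hNpos]
        have h2 : 4 * |g T' - L * T'| / ε ≤ max (max T' 1) (4 * |g T' - L * T'| / ε) :=
          le_max_right _ _
        rw [div_le_iff₀ hε] at h2
        nlinarith
    refine ⟨N, fun t ht => ?_⟩
    have htT' : T' ≤ t := le_trans hN1 ht
    have htpos : 0 < t := lt_of_lt_of_le one_pos (le_trans hN2 ht)
    -- MVT bound on [T', t] for h s := g s - L * s
    have hmvt : |g t - L * t - (g T' - L * T')| ≤ ε / 2 * (t - T') := by
      have := Convex.norm_image_sub_le_of_norm_hasDerivWithin_le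
        (f := fun s => g s - L * s) (f' := fun s => φ s - L) (s := Set.Icc T' t)
        (C := ε / 2)
        (fun x hx => (((hgder x (le_trans hT'0 hx.1)).sub
          ((hasDerivAt_id x).const_mul L)).hasDerivWithinAt).congr_deriv (by ring))
        (fun x hx => by
          have := hT x (le_trans (le_max_left T 0) hx.1)
          rw [Real.dist_eq] at this
          simpa [Real.norm_eq_abs] using this.le)
        (convex_Icc _ _) (Set.left_mem_Icc.mpr htT') (Set.right_mem_Icc.mpr htT')
      rw [Real.norm_eq_abs, Real.norm_eq_abs, abs_of_nonneg (by linarith : (0:ℝ) ≤ t - T')] at this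
      exact this
    have key : |g t - L * t| ≤ ε / 2 * t + |g T' - L * T'| := by
      calc |g t - L * t| ≤ |g t - L * t - (g T' - L * T')| + |g T' - L * T'| := by
            have := abs_sub_abs_le_abs_sub (g t - L * t) (g T' - L * T'); nlinarith [abs_add_le (g t - L * t - (g T' - L * T')) (g T' - L * T'), abs_abs (g T' - L * T')]
        _ ≤ ε / 2 * (t - T') + |g T' - L * T'| := by linarith
        _ ≤ ε / 2 * t + |g T' - L * T'| := by nlinarith
    rw [Real.dist_eq]
    have heq2 : g t / t - L = (g t - L * t) / t := by field_simp
    rw [heq2, abs_div, abs_of_pos htpos]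
    have hdivN : |g T' - L * T'| / t ≤ |g T' - L * T'| / N :=
      div_le_div_of_nonneg_left (abs_nonneg _) (lt_of_lt_of_le one_pos hN2) ht
    calc |g t - L * t| / t ≤ (ε / 2 * t + |g T' - L * T'|) / t := by gcongr
      _ = ε / 2 + |g T' - L * T'| / t := by field_simp
      _ < ε / 2 + ε / 2 := by linarith [lt_of_le_of_lt hdivN hN3]
      _ = ε := by ring
  refine ⟨⟨hmain, hLneg⟩, ?_⟩
  -- g → -∞
  have hgbot : Filter.Tendsto g Filter.atTop Filter.atBot := by
    have h1 : Filter.Tendsto (fun t => (g t / t) * t) Filter.atTop Filter.atBot :=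
      Filter.Tendsto.neg_mul_atTop hLneg hmain Filter.tendsto_id
    refine h1.congr' ?_
    filter_upwards [Filter.eventually_gt_atTop (0 : ℝ)] with t ht
    field_simp
  have : Filter.Tendsto (fun t => Real.exp (g t)) Filter.atTop (nhds 0) :=
    Real.tendsto_exp_atBot.comp hgbot
  refine this.congr' ?_
  filter_upwards [Filter.eventually_ge_atTop (0 : ℝ)] with t ht
  exact Real.exp_log (hpos t ht)
end

section
/- Existence and uniqueness of the non-trivial steady-state volume fraction above packing density: let μ > 0, α* ∈ (0,1), and α_c > α*. Then there exists a unique α∞ with α* < α∞ < min(α_c, 1) such that α_c − α∞ = (α∞ − α*)/(μ (1 − α∞)²); moreover no α ∈ (α*, 1) outside (α*, min(α_c,1)) satisfies this equation. -/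
/-- Existence and uniqueness of the non-trivial steady-state volume fraction above
packing density. -/
theorem steady_state_exists_unique_above_packing
    (μ αstar αc : ℝ) (hμ : 0 < μ) (hαstar : αstar ∈ Set.Ioo (0 : ℝ) 1)
    (hαc : αstar < αc) :
    (∃! a : ℝ, a ∈ Set.Ioo αstar (min αc 1) ∧
        αc - a = (a - αstar) / (μ * (1 - a) ^ 2)) ∧
      ∀ a ∈ Set.Ioo αstar (1 : ℝ),
        αc - a = (a - αstar) / (μ * (1 - a) ^ 2) →
          a ∈ Set.Ioo αstar (min αc 1) := by
  obtain ⟨hs0, hs1⟩ := hαstar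
  set m : ℝ := min αc 1 with hm
  have hsm : αstar < m := lt_min hαc hs1
  set f : ℝ → ℝ := fun a => μ * (αc - a) * (1 - a) ^ 2 - (a - αstar) with hf
  -- equation equivalence for a < 1
  have key : ∀ a : ℝ, a < 1 →
      (αc - a = (a - αstar) / (μ * (1 - a) ^ 2) ↔ f a = 0) := by
    intro a ha
    have h2 : (0:ℝ) < 1 - a := by linarith
    have hpos : 0 < μ * (1 - a) ^ 2 := mul_pos hμ (pow_pos h2 2)
    rw [eq_div_iff (ne_of_gt hpos)]
    simp only [hf]
    constructor <;> intro h <;> linear_combination h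
  -- f αstar > 0
  have hfs : 0 < f αstar := by
    have h1 : (0:ℝ) < 1 - αstar := by linarith
    have h2 : 0 < μ * (αc - αstar) * (1 - αstar) ^ 2 :=
      mul_pos (mul_pos hμ (sub_pos.mpr hαc)) (pow_pos h1 2)
    simp only [hf]; linarith
  -- f m < 0
  have hfm : f m < 0 := by
    rcases le_total αc 1 with h | h
    · have hme : m = αc := min_eq_left h
      rw [hme]; simp only [hf]; nlinarith
    · have hme : m = 1 := min_eq_right h
      rw [hme]; simp only [hf]; nlinarith
  -- existence via IVT
  have hcont : ContinuousOn f (Set.Icc αstar m) := by fun_prop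
  have hIVT := intermediate_value_Ioo' (le_of_lt hsm) hcont
  have h0 : (0:ℝ) ∈ Set.Ioo (f m) (f αstar) := ⟨hfm, hfs⟩
  obtain ⟨a, ha, hfa⟩ := hIVT h0
  have hm1 : m ≤ 1 := min_le_right _ _
  have hmc : m ≤ αc := min_le_left _ _
  -- uniqueness
  have uniq : ∀ x y, x ∈ Set.Ioo αstar m → y ∈ Set.Ioo αstar m →
      f x = 0 → f y = 0 → x = y := by
    have main : ∀ x y, x ∈ Set.Ioo αstar m → y ∈ Set.Ioo αstar m →
        f x = 0 → f y = 0 → x < y → False := by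
      intro x y hx hy hfx hfy hlt
      have h1 : 0 < αc - y := by linarith [lt_of_lt_of_le hy.2 hmc]
      have h2 : 0 < 1 - y := by linarith [lt_of_lt_of_le hy.2 hm1]
      have h3 : 0 < 1 - x := by linarith
      simp only [hf] at hfx hfy
      have e1 : 0 < (y - x) * (1 - x) ^ 2 :=
        mul_pos (by linarith) (pow_pos h3 2)
      have e2 : 0 < (αc - y) * ((1 - x) ^ 2 - (1 - y) ^ 2) := by
        refine mul_pos h1 ?_
        nlinarith [mul_pos (show (0:ℝ) < y - x by linarith)
          (show (0:ℝ) < (1 - x) + (1 - y) by linarith)]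
      have e3 : 0 < μ * ((y - x) * (1 - x) ^ 2 + (αc - y) * ((1 - x) ^ 2 - (1 - y) ^ 2)) :=
        mul_pos hμ (by linarith)
      nlinarith [e3]
    intro x y hx hy hfx hfy
    by_contra hne
    rcases lt_or_gt_of_ne hne with hlt | hlt
    · exact main x y hx hy hfx hfy hlt
    · exact main y x hy hx hfy hfx hlt
  constructor
  · refine ⟨a, ⟨ha, ?_⟩, ?_⟩
    · exact (key a (lt_of_lt_of_le ha.2 hm1)).mpr hfa
    · intro y ⟨hy, hey⟩
      exact uniq y a hy ha ((key y (lt_of_lt_of_le hy.2 hm1)).mp hey) hfa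
  · intro b hb heq
    have hb1 : b < 1 := hb.2
    refine ⟨hb.1, lt_min ?_ hb1⟩
    by_contra hle
    push_neg at hle
    have hd : 0 < μ * (1 - b) ^ 2 := mul_pos hμ (pow_pos (by linarith) 2)
    have hn : 0 < b - αstar := by linarith [hb.1]
    have hpos : 0 < (b - αstar) / (μ * (1 - b) ^ 2) := div_pos hn hd
    rw [← heq] at hpos
    linarith
end

section
/- Monotonicity of the steady-state volume fraction in the critical volume fraction: let μ > 0 and α* ∈ (0,1). Suppose α_{c1} ≥ α_{c2} > 0 and α₁, α₂ ∈ (0, 1) satisfy α_{c1} − α₁ = (α₁ − α*)⁺/(μ (1 − α₁)²) and α_{c2} − α₂ = (α₂ − α*)⁺/(μ (1 − α₂)²). Then α₁ ≥ α₂. -/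
/-- Monotonicity of the steady-state volume fraction in the critical volume fraction. -/
theorem steady_state_monotone_in_critical_fraction
    (μ αstar αc₁ αc₂ a₁ a₂ : ℝ) (hμ : 0 < μ)
    (hαstar : αstar ∈ Set.Ioo (0 : ℝ) 1)
    (hc₂ : 0 < αc₂) (hc : αc₂ ≤ αc₁)
    (ha₁ : a₁ ∈ Set.Ioo (0 : ℝ) 1) (ha₂ : a₂ ∈ Set.Ioo (0 : ℝ) 1)
    (he₁ : αc₁ - a₁ = max (a₁ - αstar) 0 / (μ * (1 - a₁) ^ 2))
    (he₂ : αc₂ - a₂ = max (a₂ - αstar) 0 / (μ * (1 - a₂) ^ 2)) :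
    a₂ ≤ a₁ := by
  by_contra h
  push_neg at h
  obtain ⟨h₁0, h₁1⟩ := ha₁
  obtain ⟨h₂0, h₂1⟩ := ha₂
  have hp₂ : (0:ℝ) < 1 - a₂ := by linarith
  have hp₁ : (0:ℝ) < 1 - a₁ := by linarith
  have hden₂ : 0 < μ * (1 - a₂) ^ 2 := by positivity
  have hden : μ * (1 - a₂) ^ 2 ≤ μ * (1 - a₁) ^ 2 := by nlinarith [mul_nonneg (mul_nonneg hμ.le (by linarith : (0:ℝ) ≤ a₂ - a₁)) (by linarith : (0:ℝ) ≤ 2 - a₁ - a₂)]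
  have hnum : max (a₁ - αstar) 0 ≤ max (a₂ - αstar) 0 :=
    max_le_max (by linarith) le_rfl
  have hg : max (a₁ - αstar) 0 / (μ * (1 - a₁) ^ 2)
      ≤ max (a₂ - αstar) 0 / (μ * (1 - a₂) ^ 2) :=
    div_le_div₀ (le_max_right _ _) hnum hden₂ hden
  rw [← he₁, ← he₂] at hg
  linarith
end

section
/- Monotonicity of the steady-state volume fraction in the hydrogel stiffness: let μ > 0, κ ∈ (0,1), α* ∈ (0,1), ν ≥ 0, and define α_c(ϑ) = 1 − κ + (ϑ − ν)/μ. Suppose ϑ₁ ≥ ϑ₂ ≥ ν and α₁, α₂ ∈ (0, 1) satisfy α_c(ϑᵢ) − αᵢ = (αᵢ − α*)⁺/(μ (1 − αᵢ)²) for i = 1, 2. Then α₁ ≥ α₂; i.e., stiffer hydrogels produce larger steady-state cell volume fractions. -/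
/-- Monotonicity of the steady-state volume fraction in the hydrogel stiffness:
with `α_c(ϑ) = 1 − κ + (ϑ − ν)/μ`, stiffer hydrogels produce larger steady-state
cell volume fractions. -/
theorem steady_state_monotone_in_stiffness
    (μ κ αstar ν ϑ₁ ϑ₂ a₁ a₂ : ℝ) (hμ : 0 < μ)
    (hκ : κ ∈ Set.Ioo (0 : ℝ) 1)
    (hαstar : αstar ∈ Set.Ioo (0 : ℝ) 1)
    (hν : 0 ≤ ν) (hϑ₂ : ν ≤ ϑ₂) (hϑ : ϑ₂ ≤ ϑ₁)
    (ha₁ : a₁ ∈ Set.Ioo (0 : ℝ) 1) (ha₂ : a₂ ∈ Set.Ioo (0 : ℝ) 1)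
    (he₁ : (1 - κ + (ϑ₁ - ν) / μ) - a₁ = max (a₁ - αstar) 0 / (μ * (1 - a₁) ^ 2))
    (he₂ : (1 - κ + (ϑ₂ - ν) / μ) - a₂ = max (a₂ - αstar) 0 / (μ * (1 - a₂) ^ 2)) :
    a₂ ≤ a₁ := by
  by_contra h
  push_neg at h
  obtain ⟨h10, h11⟩ := ha₁
  obtain ⟨h20, h21⟩ := ha₂
  have hd2 : 0 < μ * (1 - a₂) ^ 2 := mul_pos hμ (pow_pos (by linarith) 2)
  have hd1 : 0 < μ * (1 - a₁) ^ 2 := mul_pos hμ (pow_pos (by linarith) 2)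
  have hnum : max (a₁ - αstar) 0 ≤ max (a₂ - αstar) 0 := by
    apply max_le_max _ le_rfl
    linarith
  have hden : μ * (1 - a₂) ^ 2 ≤ μ * (1 - a₁) ^ 2 :=
    mul_le_mul_of_nonneg_left (pow_le_pow_left₀ (by linarith) (by linarith) 2) hμ.le
  have hg : max (a₁ - αstar) 0 / (μ * (1 - a₁) ^ 2)
      ≤ max (a₂ - αstar) 0 / (μ * (1 - a₂) ^ 2) :=
    div_le_div₀ (le_max_right _ _) hnum hd2 hden
  have hc : (ϑ₂ - ν) / μ ≤ (ϑ₁ - ν) / μ := by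
    gcongr <;> linarith
  linarith
end

section
/- Negative asymptotic growth rate at the supra-packing steady state: let μ > 0, ϑ ≥ ν ≥ 0, α* ∈ (0,1), and α_c > α*. Suppose α∞ ∈ (α*, 1) satisfies the steady-state equation α_c − α∞ = (α∞ − α*)/(μ (1 − α∞)²). Then the asymptotic specific growth rate of the tumour length, r := (ν − ϑ)/μ + (α∞ − α*)/(μ (1 − α∞)²), equals α_c − α∞ − (ϑ − ν)/μ and satisfies r < α_c − α* − (ϑ − ν)/μ. In particular, if α_c ≤ α* + (ϑ − ν)/μ, then r < 0 and the tumour decays. -/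
/-- Negative asymptotic growth rate at the supra-packing steady state. -/
theorem negative_growth_rate_supra_packing
    (μ ν ϑ αstar αc aInf : ℝ) (hμ : 0 < μ) (hν : 0 ≤ ν) (hνϑ : ν ≤ ϑ)
    (hαstar : αstar ∈ Set.Ioo (0 : ℝ) 1) (hαc : αstar < αc)
    (ha : aInf ∈ Set.Ioo αstar 1)
    (hss : αc - aInf = (aInf - αstar) / (μ * (1 - aInf) ^ 2)) :
    ((ν - ϑ) / μ + (aInf - αstar) / (μ * (1 - aInf) ^ 2)
        = αc - aInf - (ϑ - ν) / μ) ∧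
      ((ν - ϑ) / μ + (aInf - αstar) / (μ * (1 - aInf) ^ 2)
        < αc - αstar - (ϑ - ν) / μ) ∧
      (αc ≤ αstar + (ϑ - ν) / μ →
        (ν - ϑ) / μ + (aInf - αstar) / (μ * (1 - aInf) ^ 2) < 0) := by
  have hne : μ ≠ 0 := ne_of_gt hμ
  have h1 : (ν - ϑ) / μ + (aInf - αstar) / (μ * (1 - aInf) ^ 2)
      = αc - aInf - (ϑ - ν) / μ := by
    rw [← hss]; field_simp; ring
  have h2 : αc - aInf - (ϑ - ν) / μ < αc - αstar - (ϑ - ν) / μ := by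
    have := ha.1; linarith
  refine ⟨h1, by linarith, fun hle => ?_⟩
  have : αc - αstar - (ϑ - ν) / μ ≤ 0 := by linarith
  linarith
end
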